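/- There exist constants c₁, c₂ > 0 such that for every n ≥ 2: (i) every linear bijection S : ℝ^{2n} → ℝ^{2n} satisfies ‖S‖_{Z_2^n → ℓ_2^{2n}} · ‖S⁻¹‖_{ℓ_2^{2n} → Z_2^n} ≥ c₁·log n; and (ii) there exists a linear bijection S : ℝ^{2n} → ℝ^{2n} with ‖S‖_{Z_2^n → ℓ_2^{2n}} · ‖S⁻¹‖_{ℓ_2^{2n} → Z_2^n} ≤ c₂·log n. In other words, the Banach–Mazur distance between Z_2^n and ℓ_2^{2n} is of order log n. -/

import Mathlib

open scoped BigOperators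

/-- The Euclidean norm on `ℝⁿ`. -/
noncomputable def l2 {n : ℕ} (b : Fin n → ℝ) : ℝ := Real.sqrt (∑ j, b j ^ 2)

/-- The Kalton–Peck map `F(b)_j = b_j log(|b_j|/‖b‖₂)`, with `F(b)_j = 0` when `b_j = 0`. -/
noncomputable def KPF {n : ℕ} (b : Fin n → ℝ) : Fin n → ℝ :=
  fun j => if b j = 0 then 0 else b j * Real.log (|b j| / l2 b)

/-- The Kalton–Peck quasi-norm `‖(a,b)‖ = ‖b‖₂ + ‖a - F(b)‖₂` on `ℝⁿ × ℝⁿ`. -/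
noncomputable def znorm {n : ℕ} (x : (Fin n → ℝ) × (Fin n → ℝ)) : ℝ :=
  l2 x.2 + l2 (x.1 - KPF x.2)

/-- Operator "norm" `sup_{x ≠ 0} N_W(T x) / N_V(x)` of a map `T` between spaces
equipped with (quasi-)norms `N_V`, `N_W`. -/
noncomputable def ratioSup {V W : Type*} [Zero V] (NV : V → ℝ) (NW : W → ℝ) (T : V → W) : ℝ :=
  ⨆ x : {x : V // x ≠ 0}, NW (T x.1) / NV x.1

/-- The Euclidean norm on `ℝⁿ × ℝⁿ ≅ ℝ^{2n}`. -/
noncomputable def l2p {n : ℕ} (x : (Fin n → ℝ) × (Fin n → ℝ)) : ℝ :=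
  Real.sqrt ((∑ j, x.1 j ^ 2) + ∑ j, x.2 j ^ 2)

lemma sqrt_add_le' (A B : ℝ) (hA : 0 ≤ A) (hB : 0 ≤ B) :
    Real.sqrt (A + B) ≤ Real.sqrt A + Real.sqrt B := by
  have h : Real.sqrt (A + B) ≤ Real.sqrt ((Real.sqrt A + Real.sqrt B) ^ 2) :=
    Real.sqrt_le_sqrt (by nlinarith [Real.sq_sqrt hA, Real.sq_sqrt hB, Real.sqrt_nonneg A, Real.sqrt_nonneg B])
  rwa [Real.sqrt_sq (by positivity)] at h

lemma l2_nonneg {n : ℕ} (b : Fin n → ℝ) : 0 ≤ l2 b := Real.sqrt_nonneg _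
lemma l2_eq {n : ℕ} (b : Fin n → ℝ) : l2 b = @norm (EuclideanSpace ℝ (Fin n)) _ (WithLp.toLp 2 b) := by
  rw [EuclideanSpace.norm_eq]; simp [l2]
lemma l2_add_le {n : ℕ} (x y : Fin n → ℝ) : l2 (x + y) ≤ l2 x + l2 y := by
  rw [l2_eq, l2_eq, l2_eq]; exact norm_add_le (E := EuclideanSpace ℝ (Fin n)) (WithLp.toLp 2 x) (WithLp.toLp 2 y)
lemma l2_sub_le {n : ℕ} (x y : Fin n → ℝ) : l2 (x - y) ≤ l2 x + l2 y := by
  rw [l2_eq, l2_eq, l2_eq]; exact norm_sub_le (E := EuclideanSpace ℝ (Fin n)) (WithLp.toLp 2 x) (WithLp.toLp 2 y)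
lemma l2_smul {n : ℕ} (c : ℝ) (b : Fin n → ℝ) : l2 (c • b) = |c| * l2 b := by
  rw [l2_eq, l2_eq]
  exact norm_smul (β := EuclideanSpace ℝ (Fin n)) c (WithLp.toLp 2 b)
lemma l2_sum_le {n : ℕ} {ι : Type*} (s : Finset ι) (f : ι → (Fin n → ℝ)) :
    l2 (∑ i ∈ s, f i) ≤ ∑ i ∈ s, l2 (f i) := by
  simp only [l2_eq, WithLp.toLp_sum]
  exact norm_sum_le (E := EuclideanSpace ℝ (Fin n)) s (fun i => WithLp.toLp 2 (f i))
lemma abs_le_l2 {n : ℕ} (b : Fin n → ℝ) (j : Fin n) : |b j| ≤ l2 b := by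
  rw [← Real.sqrt_sq_eq_abs]
  apply Real.sqrt_le_sqrt
  exact Finset.single_le_sum (f := fun j => b j ^ 2) (fun i _ => sq_nonneg _) (Finset.mem_univ j)
lemma l2_pos {n : ℕ} {b : Fin n → ℝ} (hb : b ≠ 0) : 0 < l2 b := by
  obtain ⟨j, hj⟩ := Function.ne_iff.mp hb
  have : 0 < |b j| := abs_pos.mpr hj
  linarith [abs_le_l2 b j]
lemma l2_zero {n : ℕ} : l2 (0 : Fin n → ℝ) = 0 := by simp [l2]
lemma KPF_zero {n : ℕ} : KPF (0 : Fin n → ℝ) = 0 := by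
  funext j; simp [KPF]
lemma KPF_smul {n : ℕ} {c : ℝ} (hc : c ≠ 0) (b : Fin n → ℝ) : KPF (c • b) = c • KPF b := by
  rcases eq_or_ne b 0 with rfl | hb
  · simp [KPF_zero]
  funext j
  simp only [KPF, Pi.smul_apply, smul_eq_mul, mul_eq_zero]
  rcases eq_or_ne (b j) 0 with h0 | h0
  · simp [h0]
  · have : ¬ (c = 0 ∨ b j = 0) := by tauto
    rw [if_neg this, if_neg h0, l2_smul, abs_mul]
    rw [mul_div_mul_left _ _ (abs_ne_zero.mpr hc)]
    ring
lemma l2_le_l2p_1 {n : ℕ} (x : (Fin n → ℝ) × (Fin n → ℝ)) : l2 x.1 ≤ l2p x := by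
  apply Real.sqrt_le_sqrt
  have : 0 ≤ ∑ j, x.2 j ^ 2 := Finset.sum_nonneg fun i _ => sq_nonneg _
  linarith
lemma l2_le_l2p_2 {n : ℕ} (x : (Fin n → ℝ) × (Fin n → ℝ)) : l2 x.2 ≤ l2p x := by
  apply Real.sqrt_le_sqrt
  have : 0 ≤ ∑ j, x.1 j ^ 2 := Finset.sum_nonneg fun i _ => sq_nonneg _
  linarith
lemma l2p_nonneg {n : ℕ} (x : (Fin n → ℝ) × (Fin n → ℝ)) : 0 ≤ l2p x := Real.sqrt_nonneg _
lemma l2p_le {n : ℕ} (x : (Fin n → ℝ) × (Fin n → ℝ)) : l2p x ≤ l2 x.1 + l2 x.2 := by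
  exact sqrt_add_le' _ _ (Finset.sum_nonneg fun i _ => sq_nonneg _)
    (Finset.sum_nonneg fun i _ => sq_nonneg _)

lemma log_sq_le {t : ℝ} (ht : 0 < t) (ht1 : t ≤ 1) : Real.log t ^ 2 ≤ 4 / t := by
  have hst : 0 < Real.sqrt t := Real.sqrt_pos.mpr ht
  have hst1 : Real.sqrt t ≤ 1 := by
    rw [show (1:ℝ) = Real.sqrt 1 by simp]; exact Real.sqrt_le_sqrt ht1
  have h0 : 0 ≤ Real.log (1 / Real.sqrt t) := Real.log_nonneg (by rw [le_div_iff₀ hst]; linarith)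
  have h1 : Real.log (1 / Real.sqrt t) ≤ 1 / Real.sqrt t := by
    have := Real.log_le_sub_one_of_pos (show (0:ℝ) < 1 / Real.sqrt t by positivity)
    linarith
  have h2 : Real.log (1 / Real.sqrt t) ^ 2 ≤ (1 / Real.sqrt t) ^ 2 := by nlinarith
  have h3 : Real.log (1 / Real.sqrt t) = - (Real.log t / 2) := by
    rw [one_div, Real.log_inv, Real.log_sqrt ht.le]
  have h4 : (1 / Real.sqrt t) ^ 2 = 1 / t := by
    rw [div_pow, one_pow, Real.sq_sqrt ht.le]
  rw [h3, h4] at h2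
  have h6 : Real.log t ^ 2 / 4 ≤ 1 / t := by
    rw [show Real.log t ^ 2 / 4 = (-(Real.log t / 2)) ^ 2 by ring]; exact h2
  calc Real.log t ^ 2 = 4 * (Real.log t ^ 2 / 4) := by ring
    _ ≤ 4 * (1 / t) := by linarith
    _ = 4 / t := by ring

lemma KPF_coord_sq {n : ℕ} (hn : 2 ≤ n) (b : Fin n → ℝ) (j : Fin n) :
    KPF b j ^ 2 ≤ 4 * Real.log n ^ 2 * b j ^ 2 + 4 / (n:ℝ) ^ 2 * l2 b ^ 2 := by
  have hn0 : (0:ℝ) < n := by exact_mod_cast (show 0 < n by omega)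
  have hlogn : 0 ≤ Real.log n := Real.log_nonneg (by exact_mod_cast Nat.one_le_of_lt hn)
  have hl2nn : 0 ≤ l2 b := l2_nonneg b
  rcases eq_or_ne (b j) 0 with h0 | h0
  · have hz : KPF b j = 0 := by simp [KPF, h0]
    rw [hz]
    have h1 : (0:ℝ) ≤ 4 * Real.log n ^ 2 * b j ^ 2 := by positivity
    have h2 : (0:ℝ) ≤ 4 / (n:ℝ) ^ 2 * l2 b ^ 2 := by positivity
    nlinarith [h1, h2]
  · have hb : b ≠ 0 := fun h => h0 (by simp [h])
    have hl2 : 0 < l2 b := l2_pos hb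
    have habs : 0 < |b j| := abs_pos.mpr h0
    set t := |b j| / l2 b with ht
    have ht0 : 0 < t := by positivity
    have ht1 : t ≤ 1 := (div_le_one hl2).mpr (abs_le_l2 b j)
    have hKP : KPF b j ^ 2 = b j ^ 2 * Real.log t ^ 2 := by
      rw [KPF, if_neg h0]; ring
    have hbj : b j ^ 2 = t ^ 2 * l2 b ^ 2 := by
      rw [ht, div_pow, sq_abs]; field_simp
    rw [hKP]
    rcases le_or_gt (1 / (n:ℝ) ^ 2) t with hc | hc
    · have hlt : -Real.log t ≤ 2 * Real.log n := by
        have hle : Real.log (1 / (n:ℝ) ^ 2) ≤ Real.log t := Real.log_le_log (by positivity) hc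
        rw [one_div, Real.log_inv, Real.log_pow] at hle
        push_cast at hle
        linarith
      have hge : Real.log t ≤ 0 := Real.log_nonpos ht0.le ht1
      have hsq : Real.log t ^ 2 ≤ (2 * Real.log n) ^ 2 := by nlinarith
      have hm := mul_le_mul_of_nonneg_left hsq (sq_nonneg (b j))
      have hnn : (0:ℝ) ≤ 4 / (n:ℝ) ^ 2 * l2 b ^ 2 := by positivity
      nlinarith [hm, hnn]
    · have h2 : Real.log t ^ 2 ≤ 4 / t := log_sq_le ht0 ht1
      have key : b j ^ 2 * Real.log t ^ 2 ≤ 4 * t * l2 b ^ 2 := by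
        rw [hbj]
        have := mul_le_mul_of_nonneg_left h2 (mul_nonneg (sq_nonneg t) (sq_nonneg (l2 b)))
        calc t ^ 2 * l2 b ^ 2 * Real.log t ^ 2 ≤ t ^ 2 * l2 b ^ 2 * (4 / t) := by
              exact mul_le_mul_of_nonneg_left h2 (by positivity)
          _ = 4 * t * l2 b ^ 2 := by field_simp
      have h7 : (4:ℝ) * t ≤ 4 / (n:ℝ) ^ 2 := by
        calc (4:ℝ) * t ≤ 4 * (1 / (n:ℝ) ^ 2) := by linarith
          _ = 4 / (n:ℝ) ^ 2 := by ring
      have ht' : 4 * t * l2 b ^ 2 ≤ 4 / (n:ℝ) ^ 2 * l2 b ^ 2 :=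
        mul_le_mul_of_nonneg_right h7 (sq_nonneg (l2 b))
      have hnn : (0:ℝ) ≤ 4 * Real.log n ^ 2 * b j ^ 2 := by positivity
      linarith [key, ht', hnn]

lemma l2_sq {n : ℕ} (b : Fin n → ℝ) : l2 b ^ 2 = ∑ j, b j ^ 2 :=
  Real.sq_sqrt (Finset.sum_nonneg fun i _ => sq_nonneg _)

lemma KPF_bound {n : ℕ} (hn : 2 ≤ n) (b : Fin n → ℝ) :
    l2 (KPF b) ≤ (2 * Real.log n + 2) * l2 b := by
  have hn0 : (0:ℝ) < n := by exact_mod_cast (show 0 < n by omega)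
  have hlogn : 0 ≤ Real.log n := Real.log_nonneg (by exact_mod_cast Nat.one_le_of_lt hn)
  have hl2nn : 0 ≤ l2 b := l2_nonneg b
  have hsum : ∑ j, KPF b j ^ 2 ≤ (2 * Real.log n + 2) ^ 2 * l2 b ^ 2 := by
    have h1 : ∑ j, KPF b j ^ 2 ≤ ∑ j : Fin n, (4 * Real.log n ^ 2 * b j ^ 2 + 4 / (n:ℝ) ^ 2 * l2 b ^ 2) :=
      Finset.sum_le_sum fun j _ => KPF_coord_sq hn b j
    have h2 : ∑ j : Fin n, (4 * Real.log n ^ 2 * b j ^ 2 + 4 / (n:ℝ) ^ 2 * l2 b ^ 2)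
        = 4 * Real.log n ^ 2 * l2 b ^ 2 + n * (4 / (n:ℝ) ^ 2 * l2 b ^ 2) := by
      rw [Finset.sum_add_distrib, ← Finset.mul_sum, ← l2_sq, Finset.sum_const, Finset.card_univ,
        Fintype.card_fin, nsmul_eq_mul]
    have h3 : (n:ℝ) * (4 / (n:ℝ) ^ 2 * l2 b ^ 2) = 4 / n * l2 b ^ 2 := by
      field_simp
    have h4 : 4 / (n:ℝ) ≤ 2 := by
      rw [div_le_iff₀ hn0]; nlinarith [(show (2:ℝ) ≤ n by exact_mod_cast hn)]
    have h5 : 4 / (n:ℝ) * l2 b ^ 2 ≤ 2 * l2 b ^ 2 :=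
      mul_le_mul_of_nonneg_right h4 (sq_nonneg _)
    nlinarith [sq_nonneg (l2 b), mul_nonneg hlogn (sq_nonneg (l2 b))]
  calc l2 (KPF b) = Real.sqrt (∑ j, KPF b j ^ 2) := rfl
    _ ≤ Real.sqrt (((2 * Real.log n + 2) * l2 b) ^ 2) := by
        apply Real.sqrt_le_sqrt; nlinarith [hsum]
    _ = (2 * Real.log n + 2) * l2 b := Real.sqrt_sq (by positivity)

noncomputable def nrm {n : ℕ} (v : (Fin n → ℝ) × (Fin n → ℝ)) : ℝ := l2 v.1 + l2 v.2

lemma nrm_nonneg {n : ℕ} (v : (Fin n → ℝ) × (Fin n → ℝ)) : 0 ≤ nrm v :=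
  add_nonneg (l2_nonneg _) (l2_nonneg _)
lemma nrm_add_le {n : ℕ} (v w : (Fin n → ℝ) × (Fin n → ℝ)) : nrm (v + w) ≤ nrm v + nrm w := by
  have h1 := l2_add_le v.1 w.1
  have h2 := l2_add_le v.2 w.2
  simp only [nrm, Prod.fst_add, Prod.snd_add]
  linarith
lemma nrm_smul {n : ℕ} (c : ℝ) (v : (Fin n → ℝ) × (Fin n → ℝ)) : nrm (c • v) = |c| * nrm v := by
  simp only [nrm, Prod.smul_fst, Prod.smul_snd, l2_smul]
  ring
lemma nrm_sum_le {n : ℕ} {ι : Type*} (s : Finset ι) (f : ι → (Fin n → ℝ) × (Fin n → ℝ)) :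
    nrm (∑ i ∈ s, f i) ≤ ∑ i ∈ s, nrm (f i) := by
  classical
  induction s using Finset.induction_on with
  | empty => simp [nrm, l2_zero]
  | insert _ _ h ih =>
      rw [Finset.sum_insert h, Finset.sum_insert h]
      exact le_trans (nrm_add_le _ _) (by linarith [ih])
lemma l2p_le_nrm {n : ℕ} (x : (Fin n → ℝ) × (Fin n → ℝ)) : l2p x ≤ nrm x := l2p_le x
lemma nrm_le_two_l2p {n : ℕ} (x : (Fin n → ℝ) × (Fin n → ℝ)) : nrm x ≤ 2 * l2p x := by
  have h1 := l2_le_l2p_1 x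
  have h2 := l2_le_l2p_2 x
  simp only [nrm]; linarith

lemma znorm_nonneg {n : ℕ} (x : (Fin n → ℝ) × (Fin n → ℝ)) : 0 ≤ znorm x :=
  add_nonneg (l2_nonneg _) (l2_nonneg _)

lemma znorm_pos {n : ℕ} {x : (Fin n → ℝ) × (Fin n → ℝ)} (hx : x ≠ 0) : 0 < znorm x := by
  rcases eq_or_ne x.2 0 with h2 | h2
  · have hx1 : x.1 ≠ 0 := by
      intro h1; exact hx (Prod.ext h1 h2)
    have : znorm x = l2 x.2 + l2 x.1 := by
      rw [znorm, h2, KPF_zero, sub_zero]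
    rw [this, h2, l2_zero, zero_add]
    exact l2_pos hx1
  · have := l2_nonneg (x.1 - KPF x.2)
    have := l2_pos h2
    rw [znorm]; linarith

lemma nrm_le_znorm {n : ℕ} (hn : 2 ≤ n) (x : (Fin n → ℝ) × (Fin n → ℝ)) :
    nrm x ≤ (4 * Real.log n + 7) * znorm x := by
  have hlogn : 0 ≤ Real.log n := Real.log_nonneg (by exact_mod_cast Nat.one_le_of_lt hn)
  have h2 : l2 x.2 ≤ znorm x := le_add_of_nonneg_right (l2_nonneg _)
  have hc : l2 (x.1 - KPF x.2) ≤ znorm x := le_add_of_nonneg_left (l2_nonneg _)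
  have h1 : l2 x.1 ≤ l2 (x.1 - KPF x.2) + l2 (KPF x.2) := by
    have := l2_add_le (x.1 - KPF x.2) (KPF x.2)
    simpa using this
  have hK := KPF_bound hn x.2
  have hz := znorm_nonneg x
  simp only [nrm]
  nlinarith [mul_le_mul_of_nonneg_left h2 (show (0:ℝ) ≤ 2 * Real.log n + 2 by positivity)]

lemma znorm_le_nrm {n : ℕ} (hn : 2 ≤ n) (x : (Fin n → ℝ) × (Fin n → ℝ)) :
    znorm x ≤ (2 * Real.log n + 3) * nrm x := by
  have hlogn : 0 ≤ Real.log n := Real.log_nonneg (by exact_mod_cast Nat.one_le_of_lt hn)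
  have h1 : l2 (x.1 - KPF x.2) ≤ l2 x.1 + l2 (KPF x.2) := l2_sub_le _ _
  have hK := KPF_bound hn x.2
  have ha := l2_nonneg x.1
  have hb := l2_nonneg x.2
  rw [znorm]
  simp only [nrm]
  nlinarith

/-- standard basis vector -/
noncomputable def ev {n : ℕ} (i : Fin n) : Fin n → ℝ := Pi.single i 1

lemma decomp {n : ℕ} (x : (Fin n → ℝ) × (Fin n → ℝ)) :
    x = ∑ i, x.1 i • ((ev i : Fin n → ℝ), (0 : Fin n → ℝ))
      + ∑ i, x.2 i • ((0 : Fin n → ℝ), (ev i : Fin n → ℝ)) := by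
  apply Prod.ext
  · simp only [Prod.fst_add, Prod.fst_sum, Prod.smul_fst, smul_zero, Finset.sum_const_zero,
      add_zero]
    funext j
    rw [Finset.sum_apply]
    simp [ev, Pi.single_apply]
  · simp only [Prod.snd_add, Prod.snd_sum, Prod.smul_snd, smul_zero, Finset.sum_const_zero,
      zero_add]
    funext j
    rw [Finset.sum_apply]
    simp [ev, Pi.single_apply]

lemma linmap_bound {n : ℕ} (T : ((Fin n → ℝ) × (Fin n → ℝ)) →ₗ[ℝ] ((Fin n → ℝ) × (Fin n → ℝ))) :
    ∃ C : ℝ, 0 ≤ C ∧ ∀ x, nrm (T x) ≤ C * nrm x := by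
  classical
  refine ⟨∑ i, nrm (T ((ev i : Fin n → ℝ), 0)) + ∑ i, nrm (T (0, (ev i : Fin n → ℝ))), ?_, ?_⟩
  · exact add_nonneg (Finset.sum_nonneg fun i _ => nrm_nonneg _)
      (Finset.sum_nonneg fun i _ => nrm_nonneg _)
  intro x
  have hdec := decomp x
  have hT : T x = ∑ i, x.1 i • T ((ev i : Fin n → ℝ), 0)
      + ∑ i, x.2 i • T (0, (ev i : Fin n → ℝ)) := by
    conv_lhs => rw [hdec]
    rw [map_add, map_sum, map_sum]
    simp only [map_smul]
  rw [hT]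
  have h1 : nrm (∑ i, x.1 i • T ((ev i : Fin n → ℝ), 0) + ∑ i, x.2 i • T (0, (ev i : Fin n → ℝ)))
      ≤ ∑ i, |x.1 i| * nrm (T ((ev i : Fin n → ℝ), 0))
        + ∑ i, |x.2 i| * nrm (T (0, (ev i : Fin n → ℝ))) := by
    refine le_trans (nrm_add_le _ _) (add_le_add ?_ ?_) <;>
      refine le_trans (nrm_sum_le _ _) (Finset.sum_le_sum fun i _ => ?_) <;>
      rw [nrm_smul]
  refine le_trans h1 ?_
  have hx1 : ∀ i, |x.1 i| ≤ nrm x := fun i =>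
    le_trans (abs_le_l2 x.1 i) (le_add_of_nonneg_right (l2_nonneg _))
  have hx2 : ∀ i, |x.2 i| ≤ nrm x := fun i =>
    le_trans (abs_le_l2 x.2 i) (le_add_of_nonneg_left (l2_nonneg _))
  have e1 : ∑ i, |x.1 i| * nrm (T ((ev i : Fin n → ℝ), 0))
      ≤ ∑ i, nrm x * nrm (T ((ev i : Fin n → ℝ), 0)) :=
    Finset.sum_le_sum fun i _ => mul_le_mul_of_nonneg_right (hx1 i) (nrm_nonneg _)
  have e2 : ∑ i, |x.2 i| * nrm (T (0, (ev i : Fin n → ℝ)))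
      ≤ ∑ i, nrm x * nrm (T (0, (ev i : Fin n → ℝ))) :=
    Finset.sum_le_sum fun i _ => mul_le_mul_of_nonneg_right (hx2 i) (nrm_nonneg _)
  simp only [← Finset.mul_sum] at e1 e2
  nlinarith [e1, e2]

noncomputable def sgn (t : Bool) : ℝ := if t then 1 else -1

lemma sgn_sq (t : Bool) : sgn t ^ 2 = 1 := by cases t <;> simp [sgn]
lemma sgn_not (t : Bool) : sgn (!t) = -sgn t := by cases t <;> simp [sgn]
lemma sgn_ne_zero (t : Bool) : sgn t ≠ 0 := by cases t <;> simp [sgn]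
lemma abs_sgn (t : Bool) : |sgn t| = 1 := by cases t <;> simp [sgn]

lemma sum_sgn_mul {n : ℕ} {i k : Fin n} (h : i ≠ k) :
    ∑ ε : Fin n → Bool, sgn (ε i) * sgn (ε k) = 0 := by
  classical
  refine Finset.sum_ninvolution (fun ε => Function.update ε i (!ε i)) ?_ ?_ ?_ ?_
  · intro ε
    simp only [Function.update_self, Function.update_of_ne (Ne.symm h), sgn_not]
    ring
  · intro ε _
    intro hcon
    have := congrFun hcon i
    simp at this
  · intro ε; exact Finset.mem_univ _
  · intro ε
    funext j
    rcases eq_or_ne j i with rfl | hj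
    · simp
    · simp [Function.update_of_ne hj]

lemma sum_sgn_card {n : ℕ} (i : Fin n) :
    ∑ ε : Fin n → Bool, sgn (ε i) * sgn (ε i) = 2 ^ n := by
  have : ∀ ε : Fin n → Bool, sgn (ε i) * sgn (ε i) = 1 := fun ε => by
    have := sgn_sq (ε i); nlinarith
  rw [Finset.sum_congr rfl (fun ε _ => this ε), Finset.sum_const, Finset.card_univ]
  simp [Fintype.card_fun]

lemma sign_identity {n : ℕ} (r : Fin n → ℝ) :
    ∑ ε : Fin n → Bool, (∑ i, sgn (ε i) * r i) ^ 2 = 2 ^ n * ∑ i, r i ^ 2 := by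
  classical
  have hexp : ∀ ε : Fin n → Bool, (∑ i, sgn (ε i) * r i) ^ 2
      = ∑ i, ∑ k, sgn (ε i) * sgn (ε k) * (r i * r k) := by
    intro ε
    rw [sq, Finset.sum_mul_sum]
    refine Finset.sum_congr rfl fun i _ => Finset.sum_congr rfl fun k _ => by ring
  rw [Finset.sum_congr rfl (fun ε _ => hexp ε)]
  rw [Finset.sum_comm]
  have hswap : ∀ i : Fin n, ∑ ε : Fin n → Bool, ∑ k, sgn (ε i) * sgn (ε k) * (r i * r k)
      = ∑ k, (∑ ε : Fin n → Bool, sgn (ε i) * sgn (ε k)) * (r i * r k) := by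
    intro i
    rw [Finset.sum_comm]
    exact Finset.sum_congr rfl fun k _ => by rw [Finset.sum_mul]
  rw [Finset.sum_congr rfl (fun i _ => hswap i)]
  have hinner : ∀ i k : Fin n, (∑ ε : Fin n → Bool, sgn (ε i) * sgn (ε k)) * (r i * r k)
      = if k = i then (2:ℝ) ^ n * (r i * r k) else 0 := by
    intro i k
    rcases eq_or_ne k i with rfl | hk
    · rw [sum_sgn_card]; simp
    · rw [sum_sgn_mul (Ne.symm hk), if_neg hk, zero_mul]
  rw [Finset.sum_congr rfl (fun i _ => Finset.sum_congr rfl fun k _ => hinner i k)]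
  have hfin : ∀ i : Fin n, (∑ k, if k = i then (2:ℝ) ^ n * (r i * r k) else 0)
      = 2 ^ n * r i ^ 2 := by
    intro i
    rw [Finset.sum_ite_eq' Finset.univ i (fun k => (2:ℝ) ^ n * (r i * r k))]
    simp [sq]
  rw [Finset.sum_congr rfl (fun i _ => hfin i), Finset.mul_sum]

lemma l2_ev {n : ℕ} (i : Fin n) : l2 (ev i) = 1 := by
  have : ∑ j, (ev i j) ^ 2 = 1 := by
    simp [ev, Pi.single_apply]
  rw [l2, this, Real.sqrt_one]

lemma KPF_ev {n : ℕ} (i : Fin n) : KPF (ev i) = 0 := by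
  funext j
  rcases eq_or_ne j i with rfl | hj
  · have h1 : ev j j = 1 := by simp [ev]
    simp only [KPF, h1, l2_ev]
    norm_num
  · simp [KPF, ev, Pi.single_eq_of_ne hj]

lemma znorm_zero_ev {n : ℕ} (i : Fin n) : znorm ((0 : Fin n → ℝ), ev i) = 1 := by
  rw [znorm]
  simp [KPF_ev, l2_ev, l2_zero]

noncomputable def sv {n : ℕ} (ε : Fin n → Bool) : Fin n → ℝ := fun i => sgn (ε i)

lemma l2_sv {n : ℕ} (ε : Fin n → Bool) : l2 (sv ε) = Real.sqrt n := by
  have : ∑ j, (sv ε j) ^ 2 = n := by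
    simp [sv, sgn_sq]
  rw [l2, this]

lemma sv_ne_zero {n : ℕ} (hn : 0 < n) (ε : Fin n → Bool) : sv ε ≠ 0 := by
  intro h
  have := congrFun h ⟨0, hn⟩
  exact sgn_ne_zero _ this

lemma KPF_sv {n : ℕ} (hn : 0 < n) (ε : Fin n → Bool) :
    KPF (sv ε) = (-Real.log (Real.sqrt n)) • sv ε := by
  funext j
  have hne : sv ε j ≠ 0 := sgn_ne_zero _
  rw [KPF, if_neg hne, l2_sv]
  have habs : |sv ε j| = 1 := abs_sgn _
  rw [habs, one_div, Real.log_inv]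
  simp only [Pi.smul_apply, smul_eq_mul]
  ring

lemma znorm_zero_sv {n : ℕ} (hn : 2 ≤ n) (ε : Fin n → Bool) :
    znorm ((0 : Fin n → ℝ), sv ε) = Real.sqrt n * (1 + Real.log (Real.sqrt n)) := by
  have h1 : (1:ℝ) ≤ Real.sqrt n := by
    rw [show (1:ℝ) = Real.sqrt 1 by simp]
    exact Real.sqrt_le_sqrt (by exact_mod_cast Nat.one_le_of_lt hn)
  have hlog : 0 ≤ Real.log (Real.sqrt n) := Real.log_nonneg h1
  rw [znorm]
  simp only [KPF_sv (by omega : 0 < n), zero_sub]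
  rw [show -((-Real.log (Real.sqrt n)) • sv ε) = Real.log (Real.sqrt n) • sv ε by
    rw [neg_smul, neg_neg]]
  rw [l2_smul, l2_sv, abs_of_nonneg hlog]
  ring

lemma l2p_pos {n : ℕ} {x : (Fin n → ℝ) × (Fin n → ℝ)} (hx : x ≠ 0) : 0 < l2p x := by
  rcases eq_or_ne x.1 0 with h1 | h1
  · have h2 : x.2 ≠ 0 := fun h => hx (Prod.ext h1 h)
    exact lt_of_lt_of_le (l2_pos h2) (l2_le_l2p_2 x)
  · exact lt_of_lt_of_le (l2_pos h1) (l2_le_l2p_1 x)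

lemma ratioSup_le {V W : Type*} [Zero V] {NV : V → ℝ} {NW : W → ℝ} {T : V → W}
    [Nonempty {x : V // x ≠ 0}] {C : ℝ}
    (h : ∀ x : V, x ≠ 0 → NW (T x) ≤ C * NV x) (hNV : ∀ x : V, x ≠ 0 → 0 < NV x) :
    ratioSup NV NW T ≤ C := by
  apply ciSup_le
  rintro ⟨x, hx⟩
  rw [div_le_iff₀ (hNV x hx)]
  exact h x hx

lemma ratioSup_nonneg {V W : Type*} [Zero V] {NV : V → ℝ} {NW : W → ℝ} {T : V → W}
    (hNW : ∀ w : W, 0 ≤ NW w) (hNV : ∀ v : V, 0 ≤ NV v) :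
    0 ≤ ratioSup NV NW T :=
  Real.iSup_nonneg fun x => div_nonneg (hNW _) (hNV _)

lemma le_ratioSup {V W : Type*} [Zero V] {NV : V → ℝ} {NW : W → ℝ} {T : V → W} {C : ℝ}
    (hb : ∀ x : V, x ≠ 0 → NW (T x) ≤ C * NV x) (hNV : ∀ x : V, x ≠ 0 → 0 < NV x)
    (x : V) (hx : x ≠ 0) : NW (T x) ≤ ratioSup NV NW T * NV x := by
  have hbdd : BddAbove (Set.range fun p : {x : V // x ≠ 0} => NW (T p.1) / NV p.1) := by
    refine ⟨C, ?_⟩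
    rintro _ ⟨p, rfl⟩
    rw [div_le_iff₀ (hNV _ p.2)]
    exact hb p.1 p.2
  have h := le_ciSup hbdd ⟨x, hx⟩
  rw [div_le_iff₀ (hNV x hx)] at h
  exact h

lemma ev_ne_zero {n : ℕ} (i : Fin n) : (ev i : Fin n → ℝ) ≠ 0 := by
  intro h
  have := congrFun h i
  simp [ev] at this

noncomputable def scaleS {n : ℕ} (L : ℝ) (hL : L ≠ 0) :
    ((Fin n → ℝ) × (Fin n → ℝ)) ≃ₗ[ℝ] ((Fin n → ℝ) × (Fin n → ℝ)) where
  toFun := fun x => (x.1, L • x.2)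
  invFun := fun x => (x.1, L⁻¹ • x.2)
  map_add' := fun x y => by simp [Prod.ext_iff, smul_add]
  map_smul' := fun c x => by
    refine Prod.ext rfl ?_
    exact smul_comm L c x.2
  left_inv := fun x => by simp [smul_smul, inv_mul_cancel₀ hL]
  right_inv := fun x => by simp [smul_smul, mul_inv_cancel₀ hL]

lemma scaleS_apply {n : ℕ} (L : ℝ) (hL : L ≠ 0) (x : (Fin n → ℝ) × (Fin n → ℝ)) :
    scaleS (n := n) L hL x = (x.1, L • x.2) := rfl

lemma scaleS_symm_apply {n : ℕ} (L : ℝ) (hL : L ≠ 0) (x : (Fin n → ℝ) × (Fin n → ℝ)) :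
    (scaleS (n := n) L hL).symm x = (x.1, L⁻¹ • x.2) := rfl

lemma avg_q {n : ℕ} (u : Fin n → (Fin n → ℝ) × (Fin n → ℝ)) :
    ∑ ε : Fin n → Bool,
        ((∑ j, (∑ i, sgn (ε i) • u i).1 j ^ 2) + ∑ j, (∑ i, sgn (ε i) • u i).2 j ^ 2)
      = 2 ^ n * ∑ i, ((∑ j, (u i).1 j ^ 2) + ∑ j, (u i).2 j ^ 2) := by
  classical
  have hc1 : ∀ (ε : Fin n → Bool) (j : Fin n),
      (∑ i, sgn (ε i) • u i).1 j = ∑ i, sgn (ε i) * (u i).1 j := by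
    intro ε j
    rw [Prod.fst_sum, Finset.sum_apply]
    exact Finset.sum_congr rfl fun i _ => rfl
  have hc2 : ∀ (ε : Fin n → Bool) (j : Fin n),
      (∑ i, sgn (ε i) • u i).2 j = ∑ i, sgn (ε i) * (u i).2 j := by
    intro ε j
    rw [Prod.snd_sum, Finset.sum_apply]
    exact Finset.sum_congr rfl fun i _ => rfl
  have step1 : ∑ ε : Fin n → Bool,
        ((∑ j, (∑ i, sgn (ε i) • u i).1 j ^ 2) + ∑ j, (∑ i, sgn (ε i) • u i).2 j ^ 2)
      = (∑ ε : Fin n → Bool, ∑ j, (∑ i, sgn (ε i) * (u i).1 j) ^ 2)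
        + ∑ ε : Fin n → Bool, ∑ j, (∑ i, sgn (ε i) * (u i).2 j) ^ 2 := by
    rw [← Finset.sum_add_distrib]
    refine Finset.sum_congr rfl fun ε _ => ?_
    congr 1
    · exact Finset.sum_congr rfl fun j _ => by rw [hc1]
    · exact Finset.sum_congr rfl fun j _ => by rw [hc2]
  rw [step1]
  have swap1 : ∑ ε : Fin n → Bool, ∑ j, (∑ i, sgn (ε i) * (u i).1 j) ^ 2
      = ∑ j, (2:ℝ) ^ n * ∑ i, (u i).1 j ^ 2 := by
    rw [Finset.sum_comm]
    exact Finset.sum_congr rfl fun j _ => sign_identity (fun i => (u i).1 j)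
  have swap2 : ∑ ε : Fin n → Bool, ∑ j, (∑ i, sgn (ε i) * (u i).2 j) ^ 2
      = ∑ j, (2:ℝ) ^ n * ∑ i, (u i).2 j ^ 2 := by
    rw [Finset.sum_comm]
    exact Finset.sum_congr rfl fun j _ => sign_identity (fun i => (u i).2 j)
  rw [swap1, swap2, ← Finset.mul_sum, ← Finset.mul_sum, ← mul_add]
  congr 1
  rw [← Finset.sum_add_distrib]
  rw [show ∑ x : Fin n, (∑ i : Fin n, (u i).1 x ^ 2 + ∑ i : Fin n, (u i).2 x ^ 2)
      = ∑ x : Fin n, ∑ i : Fin n, ((u i).1 x ^ 2 + (u i).2 x ^ 2) from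
    Finset.sum_congr rfl fun x _ => (Finset.sum_add_distrib).symm]
  rw [Finset.sum_comm]
  exact Finset.sum_congr rfl fun i _ => Finset.sum_add_distrib

set_option maxHeartbeats 1000000 in
/-- The Banach–Mazur distance between `Z_2^n` and `ℓ_2^{2n}` is of order `log n`. -/
theorem banach_mazur_znorm_l2 :
    ∃ c₁ : ℝ, 0 < c₁ ∧ ∃ c₂ : ℝ, 0 < c₂ ∧ ∀ n : ℕ, 2 ≤ n →
      (∀ S : ((Fin n → ℝ) × (Fin n → ℝ)) ≃ₗ[ℝ] ((Fin n → ℝ) × (Fin n → ℝ)),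
        c₁ * Real.log n ≤
          ratioSup znorm l2p (fun x => S x) * ratioSup l2p znorm (fun x => S.symm x)) ∧
      (∃ S : ((Fin n → ℝ) × (Fin n → ℝ)) ≃ₗ[ℝ] ((Fin n → ℝ) × (Fin n → ℝ)),
        ratioSup znorm l2p (fun x => S x) * ratioSup l2p znorm (fun x => S.symm x) ≤
          c₂ * Real.log n) := by
  refine ⟨1/2, by norm_num, 48, by norm_num, ?_⟩
  intro n hn
  have hn0 : 0 < n := by omega
  have hnR : (2:ℝ) ≤ n := by exact_mod_cast hn
  have hlog2 : (0.6931471803 : ℝ) < Real.log 2 := Real.log_two_gt_d9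
  have hlogn2 : Real.log 2 ≤ Real.log n := Real.log_le_log (by norm_num) hnR
  have hlogn0 : 0 < Real.log n := by linarith
  have hsq1 : (1:ℝ) ≤ Real.sqrt n := by
    rw [show (1:ℝ) = Real.sqrt 1 by simp]
    exact Real.sqrt_le_sqrt (by linarith)
  have hlogsq : 0 ≤ Real.log (Real.sqrt n) := Real.log_nonneg hsq1
  haveI hne_inst : Nonempty {x : (Fin n → ℝ) × (Fin n → ℝ) // x ≠ 0} :=
    ⟨⟨((0 : Fin n → ℝ), ev ⟨0, hn0⟩), fun h => ev_ne_zero _ (congrArg Prod.snd h)⟩⟩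
  constructor
  · -- lower bound
    intro S
    obtain ⟨C, hC0, hC⟩ := linmap_bound (S : ((Fin n → ℝ) × (Fin n → ℝ)) →ₗ[ℝ] _)
    obtain ⟨C', hC'0, hC'⟩ := linmap_bound (S.symm : ((Fin n → ℝ) × (Fin n → ℝ)) →ₗ[ℝ] _)
    have hAa : ∀ x : (Fin n → ℝ) × (Fin n → ℝ), x ≠ 0 →
        l2p (S x) ≤ (C * (4 * Real.log n + 7)) * znorm x := by
      intro x hx
      have h1 : l2p (S x) ≤ nrm (S x) := l2p_le_nrm _
      have h2 : nrm (S x) ≤ C * nrm x := by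
        have := hC x
        simpa using this
      have h3 : nrm x ≤ (4 * Real.log n + 7) * znorm x := nrm_le_znorm hn x
      have h4 := mul_le_mul_of_nonneg_left h3 hC0
      calc l2p (S x) ≤ nrm (S x) := h1
        _ ≤ C * nrm x := h2
        _ ≤ C * ((4 * Real.log n + 7) * znorm x) := h4
        _ = (C * (4 * Real.log n + 7)) * znorm x := by ring
    have hBa : ∀ y : (Fin n → ℝ) × (Fin n → ℝ), y ≠ 0 →
        znorm (S.symm y) ≤ ((2 * Real.log n + 3) * (C' * 2)) * l2p y := by
      intro y hy
      have h1 : znorm (S.symm y) ≤ (2 * Real.log n + 3) * nrm (S.symm y) := znorm_le_nrm hn _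
      have h2 : nrm (S.symm y) ≤ C' * nrm y := by
        have := hC' y
        simpa using this
      have h3 : nrm y ≤ 2 * l2p y := nrm_le_two_l2p y
      have h5 : (0:ℝ) ≤ 2 * Real.log n + 3 := by linarith
      calc znorm (S.symm y) ≤ (2 * Real.log n + 3) * nrm (S.symm y) := h1
        _ ≤ (2 * Real.log n + 3) * (C' * nrm y) := mul_le_mul_of_nonneg_left h2 h5
        _ ≤ (2 * Real.log n + 3) * (C' * (2 * l2p y)) := by
            apply mul_le_mul_of_nonneg_left _ h5
            exact mul_le_mul_of_nonneg_left h3 hC'0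
        _ = ((2 * Real.log n + 3) * (C' * 2)) * l2p y := by ring
    have hA := fun x hx => le_ratioSup hAa (fun x hx => znorm_pos hx) x hx
    have hB := fun y hy => le_ratioSup hBa (fun y hy => l2p_pos hy) y hy
    set A := ratioSup znorm l2p (fun x => S x) with hAdef
    set B := ratioSup l2p znorm (fun x => S.symm x) with hBdef
    have hA0 : 0 ≤ A := ratioSup_nonneg (fun w => l2p_nonneg w) (fun v => znorm_nonneg v)
    have hB0 : 0 ≤ B := ratioSup_nonneg (fun w => znorm_nonneg w) (fun v => l2p_nonneg v)
    set u : Fin n → (Fin n → ℝ) × (Fin n → ℝ) := fun i => S ((0 : Fin n → ℝ), ev i) with hudef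
    have hu : ∀ i, l2p (u i) ≤ A := by
      intro i
      have hnei : ((0 : Fin n → ℝ), ev i) ≠ 0 := fun h => ev_ne_zero i (congrArg Prod.snd h)
      have := hA _ hnei
      rwa [znorm_zero_ev, mul_one] at this
    set R := Real.sqrt n * (1 + Real.log (Real.sqrt n)) with hRdef
    have hR0 : 0 ≤ R := mul_nonneg (Real.sqrt_nonneg _) (by linarith)
    have hRle : ∀ ε : Fin n → Bool, R ≤ B * l2p (S ((0 : Fin n → ℝ), sv ε)) := by
      intro ε
      have hnev : ((0 : Fin n → ℝ), sv ε) ≠ 0 := fun h => sv_ne_zero hn0 ε (congrArg Prod.snd h)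
      have hSne : S ((0 : Fin n → ℝ), sv ε) ≠ 0 := by
        intro h
        exact hnev (S.map_eq_zero_iff.mp h)
      have := hB _ hSne
      rwa [LinearEquiv.symm_apply_apply, znorm_zero_sv hn ε] at this
    have hdecsv : ∀ ε : Fin n → Bool, S ((0 : Fin n → ℝ), sv ε) = ∑ i, sgn (ε i) • u i := by
      intro ε
      have h0 : ((0 : Fin n → ℝ), sv ε) = ∑ i, sgn (ε i) • ((0 : Fin n → ℝ), ev i) := by
        apply Prod.ext
        · rw [Prod.fst_sum]
          simp
        · simp only [Prod.snd_sum, Prod.smul_snd]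
          funext j
          rw [Finset.sum_apply]
          simp [ev, sv, Pi.single_apply]
      rw [h0, map_sum]
      simp only [map_smul]; rfl
    have hq : ∀ v : (Fin n → ℝ) × (Fin n → ℝ),
        (∑ j, v.1 j ^ 2) + (∑ j, v.2 j ^ 2) = l2p v ^ 2 := by
      intro v
      rw [l2p, Real.sq_sqrt]
      positivity
    have havg := avg_q u
    have hstep1 : ∀ ε : Fin n → Bool, R ^ 2 ≤
        B ^ 2 * ((∑ j, (∑ i, sgn (ε i) • u i).1 j ^ 2) + ∑ j, (∑ i, sgn (ε i) • u i).2 j ^ 2) := by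
      intro ε
      have h1 := hRle ε
      rw [hdecsv ε] at h1
      have h2 := pow_le_pow_left₀ hR0 h1 2
      rw [hq]
      calc R ^ 2 ≤ (B * l2p (∑ i, sgn (ε i) • u i)) ^ 2 := h2
        _ = B ^ 2 * l2p (∑ i, sgn (ε i) • u i) ^ 2 := by ring
    have hsum1 : (2 ^ n : ℝ) * R ^ 2
        ≤ B ^ 2 * (2 ^ n * ∑ i, ((∑ j, (u i).1 j ^ 2) + ∑ j, (u i).2 j ^ 2)) := by
      calc (2 ^ n : ℝ) * R ^ 2 = ∑ _ε : Fin n → Bool, R ^ 2 := by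
            rw [Finset.sum_const, Finset.card_univ, Fintype.card_fun]
            simp [nsmul_eq_mul]
            try push_cast
            try ring
        _ ≤ ∑ ε : Fin n → Bool,
              B ^ 2 * ((∑ j, (∑ i, sgn (ε i) • u i).1 j ^ 2)
                + ∑ j, (∑ i, sgn (ε i) • u i).2 j ^ 2) :=
            Finset.sum_le_sum fun ε _ => hstep1 ε
        _ = B ^ 2 * ∑ ε : Fin n → Bool,
              ((∑ j, (∑ i, sgn (ε i) • u i).1 j ^ 2)
                + ∑ j, (∑ i, sgn (ε i) • u i).2 j ^ 2) := by rw [Finset.mul_sum]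
        _ = B ^ 2 * (2 ^ n * ∑ i, ((∑ j, (u i).1 j ^ 2) + ∑ j, (u i).2 j ^ 2)) := by rw [havg]
    have hsum2 : ∑ i, ((∑ j, (u i).1 j ^ 2) + ∑ j, (u i).2 j ^ 2) ≤ (n : ℝ) * A ^ 2 := by
      calc ∑ i, ((∑ j, (u i).1 j ^ 2) + ∑ j, (u i).2 j ^ 2) ≤ ∑ _i : Fin n, A ^ 2 := by
            refine Finset.sum_le_sum fun i _ => ?_
            rw [hq]
            exact pow_le_pow_left₀ (l2p_nonneg _) (hu i) 2
        _ = (n : ℝ) * A ^ 2 := by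
            rw [Finset.sum_const, Finset.card_univ, Fintype.card_fin, nsmul_eq_mul]
    have h2n : (0:ℝ) < 2 ^ n := by positivity
    have hfin : R ^ 2 ≤ B ^ 2 * ((n : ℝ) * A ^ 2) := by
      have hstep : B ^ 2 * (2 ^ n * ∑ i, ((∑ j, (u i).1 j ^ 2) + ∑ j, (u i).2 j ^ 2))
          ≤ B ^ 2 * (2 ^ n * ((n:ℝ) * A ^ 2)) := by
        apply mul_le_mul_of_nonneg_left _ (sq_nonneg B)
        exact mul_le_mul_of_nonneg_left hsum2 h2n.le
      have h3 : (2 ^ n : ℝ) * R ^ 2 ≤ 2 ^ n * (B ^ 2 * ((n:ℝ) * A ^ 2)) := by nlinarith [hsum1, hstep]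
      exact le_of_mul_le_mul_left (by linarith [h3]) h2n
    have hRsq : R ^ 2 = (n : ℝ) * (1 + Real.log (Real.sqrt n)) ^ 2 := by
      rw [hRdef, mul_pow, Real.sq_sqrt (by linarith : (0:ℝ) ≤ n)]
    have hABsq : (1 + Real.log (Real.sqrt n)) ^ 2 ≤ (A * B) ^ 2 := by
      have hnpos : (0:ℝ) < n := by linarith
      nlinarith [hfin, hRsq]
    have hAB : 1 + Real.log (Real.sqrt n) ≤ A * B := by
      have h1 : (0:ℝ) ≤ 1 + Real.log (Real.sqrt n) := by linarith
      have h2 : 0 ≤ A * B := mul_nonneg hA0 hB0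
      have := Real.sqrt_le_sqrt hABsq
      rwa [Real.sqrt_sq h1, Real.sqrt_sq h2] at this
    have hhalf : (1/2 : ℝ) * Real.log n = Real.log (Real.sqrt n) := by
      rw [Real.log_sqrt (by linarith : (0:ℝ) ≤ n)]
      ring
    linarith
  · -- upper bound
    set L := Real.log n with hLdef
    have hL : L ≠ 0 := ne_of_gt hlogn0
    refine ⟨scaleS (n := n) L hL, ?_⟩
    have hAle : ratioSup znorm l2p (fun x => scaleS (n := n) L hL x) ≤ 3 * L + 2 := by
      apply ratioSup_le _ (fun x hx => znorm_pos hx)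
      intro x hx
      rw [scaleS_apply]
      have h1 : l2p (x.1, L • x.2) ≤ l2 x.1 + L * l2 x.2 := by
        have h := l2p_le (x.1, L • x.2)
        have : l2 ((x.1, L • x.2).2) = L * l2 x.2 := by
          show l2 (L • x.2) = L * l2 x.2
          rw [l2_smul, abs_of_pos hlogn0]
        rw [this] at h
        exact h
      have h2 : l2 x.1 ≤ l2 (x.1 - KPF x.2) + (2 * L + 2) * l2 x.2 := by
        have ha := l2_add_le (x.1 - KPF x.2) (KPF x.2)
        rw [sub_add_cancel] at ha
        have hb := KPF_bound hn x.2
        rw [← hLdef] at hb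
        linarith
      have h3 := l2_nonneg (x.1 - KPF x.2)
      have h4 := l2_nonneg x.2
      rw [znorm]
      show l2p (x.1, L • x.2) ≤ (3 * L + 2) * (l2 x.2 + l2 (x.1 - KPF x.2))
      nlinarith [hlogn0]
    have hBle : ratioSup l2p znorm (fun x => (scaleS (n := n) L hL).symm x) ≤ 8 := by
      apply ratioSup_le _ (fun x hx => l2p_pos hx)
      intro y hy
      rw [scaleS_symm_apply]
      have hKs : KPF (L⁻¹ • y.2) = L⁻¹ • KPF y.2 := KPF_smul (inv_ne_zero hL) y.2
      have hinv0 : (0:ℝ) < L⁻¹ := by positivity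
      have e1 : l2 (L⁻¹ • y.2) = L⁻¹ * l2 y.2 := by
        rw [l2_smul, abs_of_pos hinv0]
      have e2 : l2 (y.1 - KPF (L⁻¹ • y.2)) ≤ l2 y.1 + L⁻¹ * l2 (KPF y.2) := by
        rw [hKs]
        have := l2_sub_le y.1 (L⁻¹ • KPF y.2)
        rw [l2_smul, abs_of_pos hinv0] at this
        exact this
      have hb := KPF_bound hn y.2
      rw [← hLdef] at hb
      have h5 : znorm (y.1, L⁻¹ • y.2) = l2 (L⁻¹ • y.2) + l2 (y.1 - KPF (L⁻¹ • y.2)) := rfl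
      have h6 : l2 y.1 ≤ l2p y := l2_le_l2p_1 y
      have h7 : l2 y.2 ≤ l2p y := l2_le_l2p_2 y
      have h8 : L⁻¹ * (2 * L + 3) ≤ 7 := by
        rw [inv_mul_le_iff₀ hlogn0]
        nlinarith [hlogn2, hlog2]
      have h9 : 0 ≤ l2 y.2 := l2_nonneg _
      have h10 : 0 ≤ l2 (KPF y.2) := l2_nonneg _
      have h11 : L⁻¹ * l2 (KPF y.2) ≤ L⁻¹ * ((2 * L + 2) * l2 y.2) :=
        mul_le_mul_of_nonneg_left hb hinv0.le
      rw [h5, e1]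
      have h13 : (L⁻¹ * (2 * L + 3)) * l2 y.2 ≤ 7 * l2 y.2 :=
        mul_le_mul_of_nonneg_right h8 h9
      have h15 : L⁻¹ * l2 y.2 + L⁻¹ * ((2 * L + 2) * l2 y.2)
          = (L⁻¹ * (2 * L + 3)) * l2 y.2 := by ring
      linarith [e2, h11, h13, h15, h6, h7]
    have hA0' : 0 ≤ ratioSup znorm l2p (fun x => scaleS (n := n) L hL x) :=
      ratioSup_nonneg (fun w => l2p_nonneg w) (fun v => znorm_nonneg v)
    have hB0' : 0 ≤ ratioSup l2p znorm (fun x => (scaleS (n := n) L hL).symm x) :=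
      ratioSup_nonneg (fun w => znorm_nonneg w) (fun v => l2p_nonneg v)
    have hprod : ratioSup znorm l2p (fun x => scaleS (n := n) L hL x)
        * ratioSup l2p znorm (fun x => (scaleS (n := n) L hL).symm x) ≤ (3 * L + 2) * 8 :=
      mul_le_mul hAle hBle hB0' (by nlinarith [hlogn0])
    have : (3 * L + 2) * 8 ≤ 48 * L := by nlinarith [hlogn2, hlog2]
    linarith
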